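/- Let M be an n×n Hermitian positive-definite complex matrix, let f : {1,…,n} → {1,…,n} be an involution (f ∘ f = id), and suppose M_{ij} ≠ 0 if and only if (i = j or i = f(j)). Let A ⊆ {1,…,n} be nonempty. Then there exists an extensively local reduced observable for M on A — i.e. an n×n matrix o supported on A×A with M·o = oᴴ·M such that for every i ∈ A there is j ∈ A with o_{ij} ≠ 0 or o_{ji} ≠ 0 — if and only if f(A) = A. -/

import Mathlib

open scoped ComplexOrder Matrix

/-- Let `M` be a Hermitian positive-definite reduced metric decomposing into
`1 × 1` and `2 × 2` blocks with associated involution `f` (so `M i j ≠ 0 ↔ i = j ∨ i = f j`),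
and let `A` be a nonempty set of sites. Then an extensively local reduced observable for `M` on
`A` exists if and only if `A` is invariant under `f`, i.e. `f '' A = A`. -/
theorem stmt_15 (n : ℕ) (M : Matrix (Fin n) (Fin n) ℂ) (hM : M.PosDef)
    (f : Fin n → Fin n) (hf : ∀ i, f (f i) = i)
    (hMf : ∀ i j, M i j ≠ 0 ↔ (i = j ∨ i = f j))
    (A : Set (Fin n)) (hA : A.Nonempty) :
    (∃ o : Matrix (Fin n) (Fin n) ℂ,
      (∀ i j, (i ∉ A ∨ j ∉ A) → o i j = 0) ∧ M * o = oᴴ * M ∧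
      ∀ i ∈ A, ∃ j ∈ A, o i j ≠ 0 ∨ o j i ≠ 0) ↔
    f '' A = A := by
  classical
  constructor
  · rintro ⟨o, hsupp, hcomm, hext⟩
    have key : ∀ i ∈ A, f i ∈ A := by
      intro i hi
      by_contra hfi
      have hMfi : M (f i) i ≠ 0 := (hMf (f i) i).2 (Or.inr rfl)
      -- row i of o is zero
      have hrow : ∀ l, o i l = 0 := by
        intro l
        have h1 : (M * o) (f i) l = (oᴴ * M) (f i) l := by rw [hcomm]
        rw [Matrix.mul_apply, Matrix.mul_apply] at h1
        have hL : ∑ k, M (f i) k * o k l = M (f i) i * o i l := by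
          refine Finset.sum_eq_single i ?_ ?_
          · intro k _ hk
            by_cases hkfi : k = f i
            · subst hkfi
              rw [hsupp (f i) l (Or.inl hfi), mul_zero]
            · have : M (f i) k = 0 := by
                by_contra h
                rcases (hMf (f i) k).1 h with h' | h'
                · exact hkfi h'.symm
                · exact hk (by rw [← hf k, ← h', hf i])
              rw [this, zero_mul]
          · intro h; exact absurd (Finset.mem_univ i) h
        have hR : ∑ k, (oᴴ) (f i) k * M k l = 0 := by
          refine Finset.sum_eq_zero fun k _ => ?_
          rw [Matrix.conjTranspose_apply, hsupp k (f i) (Or.inr hfi)]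
          simp
        rw [hL, hR] at h1
        exact (mul_eq_zero.1 h1).resolve_left hMfi
      -- column i of o is in the kernel of M
      have hker : M *ᵥ (fun k => o k i) = 0 := by
        funext l
        have h1 : (M * o) l i = (oᴴ * M) l i := by rw [hcomm]
        rw [Matrix.mul_apply, Matrix.mul_apply] at h1
        have hR : ∑ k, (oᴴ) l k * M k i = 0 := by
          refine Finset.sum_eq_zero fun k _ => ?_
          rw [Matrix.conjTranspose_apply]
          by_cases hki : k = i
          · subst hki; rw [hrow l]; simp
          · by_cases hkfi : k = f i
            · subst hkfi; rw [hsupp (f i) l (Or.inl hfi)]; simp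
            · have : M k i = 0 := by
                by_contra h
                rcases (hMf k i).1 h with h' | h'
                · exact hki h'
                · exact hkfi h'
              rw [this, mul_zero]
        rw [hR] at h1
        simpa [Matrix.mulVec, dotProduct] using h1
      have hcol : ∀ l, o l i = 0 := by
        have hv : (fun k => o k i) = 0 := by
          by_contra hv
          have := hM.dotProduct_mulVec_pos hv
          rw [hker] at this
          simp at this
        intro l
        exact congrFun hv l
      obtain ⟨j, _, hne⟩ := hext i hi
      rcases hne with h | h
      · exact h (hrow j)
      · exact h (hcol j)
    apply Set.eq_of_subset_of_subset
    · rintro x ⟨a, ha, rfl⟩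
      exact key a ha
    · intro x hx
      exact ⟨f x, key x hx, hf x⟩
  · intro hfA
    have hmem : ∀ j, j ∈ A ↔ f j ∈ A := by
      intro j
      constructor
      · intro hj
        rw [← hfA]; exact ⟨j, hj, rfl⟩
      · intro hj
        rw [← hfA] at hj
        rcases hj with ⟨a, ha, hfa⟩
        have : a = j := by rw [← hf a, hfa, hf j]
        rwa [← this]
    refine ⟨Matrix.of fun i j => if i = j ∧ i ∈ A then (1:ℂ) else 0, ?_, ?_, ?_⟩
    · intro i j hij
      simp only [Matrix.of_apply, ite_eq_right_iff, and_imp]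
      rintro rfl hi
      exact absurd (hij.elim id id) (not_not_intro hi)
    · ext i j
      rw [Matrix.mul_apply, Matrix.mul_apply]
      have hL : ∑ k, M i k * (Matrix.of fun i j => if i = j ∧ i ∈ A then (1:ℂ) else 0) k j
          = M i j * (if j ∈ A then 1 else 0) := by
        have h0 : ∑ k, M i k * (Matrix.of fun i j => if i = j ∧ i ∈ A then (1:ℂ) else 0) k j
            = M i j * (Matrix.of fun i j => if i = j ∧ i ∈ A then (1:ℂ) else 0) j j := by
          refine Finset.sum_eq_single j ?_ ?_
          · intro k _ hk
            simp only [Matrix.of_apply]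
            rw [if_neg (fun h => hk h.1), mul_zero]
          · intro h; exact absurd (Finset.mem_univ j) h
        rw [h0]
        simp only [Matrix.of_apply]
        by_cases hj : j ∈ A <;> simp [hj]
      have hR : ∑ k, ((Matrix.of fun i j => if i = j ∧ i ∈ A then (1:ℂ) else 0)ᴴ) i k * M k j
          = (if i ∈ A then 1 else 0) * M i j := by
        have h0 : ∑ k, ((Matrix.of fun i j => if i = j ∧ i ∈ A then (1:ℂ) else 0)ᴴ) i k * M k j
            = ((Matrix.of fun i j => if i = j ∧ i ∈ A then (1:ℂ) else 0)ᴴ) i i * M i j := by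
          refine Finset.sum_eq_single i ?_ ?_
          · intro k _ hk
            simp only [Matrix.conjTranspose_apply, Matrix.of_apply]
            rw [if_neg (fun h => hk h.1)]
            simp
          · intro h; exact absurd (Finset.mem_univ i) h
        rw [h0]
        simp only [Matrix.conjTranspose_apply, Matrix.of_apply]
        by_cases hi : i ∈ A <;> simp [hi]
      rw [hL, hR]
      by_cases hi : i ∈ A <;> by_cases hj : j ∈ A
      · simp [hi, hj]
      · simp only [hi, hj, if_true, if_false, mul_zero, one_mul]
        by_contra h
        rcases (hMf i j).1 (fun h0 => h (h0 ▸ by simp)) with h' | h'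
        · exact hj (h' ▸ hi)
        · exact hj ((hmem j).2 (h' ▸ hi))
      · simp only [hi, hj, if_true, if_false, mul_one, zero_mul]
        by_contra h
        rcases (hMf i j).1 (fun h0 => h (h0 ▸ by simp)) with h' | h'
        · exact hi (h'.symm ▸ hj)
        · exact hi (h' ▸ (hmem j).1 hj)
      · simp [hi, hj]
    · intro i hi
      exact ⟨i, hi, Or.inl (by simp [hi])⟩
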